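/- Let d ≥ 2, let δ̂ : ℝ → ℝ be continuous, differentiable, convex, and strictly increasing on [0,∞) with δ̂(0) = 0, and set δ(x,y) = δ̂(‖x − y‖) for x, y ∈ ℝ^d (Euclidean norm). Let y₁, …, yₙ ∈ ℝ^d be pairwise distinct points, let ω ∈ ℝⁿ be a weight vector and ω₀ ∈ ℝ a threshold. Define, for i ∈ {1,…,n}, the generalized Laguerre cell Cᵢ = {x ∈ ℝ^d : δ(x,yᵢ) + ωᵢ ≤ ω₀ and δ(x,yᵢ) + ωᵢ ≤ δ(x,y_k) + ω_k for all k ≠ i}, and C₀ = {x ∈ ℝ^d : ω₀ ≤ δ(x,y_k) + ω_k for all k ∈ {1,…,n}}. Then for any i, j ∈ {0,1,…,n} with i ≠ j, the intersection Cᵢ ∩ Cⱼ has d-dimensional Lebesgue measure zero. -/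

import Mathlib

open MeasureTheory

lemma sqrtSqStrictConvex {δhat : ℝ → ℝ}
    (hconv : ConvexOn ℝ Set.univ δhat)
    (hmono : ∀ u v : ℝ, 0 ≤ u → u < v → δhat u < δhat v)
    {s : ℝ} (hs : 0 < s) :
    StrictConvexOn ℝ Set.univ (fun u => δhat (Real.sqrt (u ^ 2 + s))) := by
  refine ⟨convex_univ, ?_⟩
  rintro u - v - huv a b ha hb hab
  simp only [smul_eq_mul]
  have h1u : (0:ℝ) < u ^ 2 + s := by positivity
  have h1v : (0:ℝ) < v ^ 2 + s := by positivity
  have hsu := Real.sqrt_pos.2 h1u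
  have hsv := Real.sqrt_pos.2 h1v
  have hR : 0 < a * Real.sqrt (u ^ 2 + s) + b * Real.sqrt (v ^ 2 + s) := by positivity
  have key : Real.sqrt ((a * u + b * v) ^ 2 + s)
      < a * Real.sqrt (u ^ 2 + s) + b * Real.sqrt (v ^ 2 + s) := by
    rw [Real.sqrt_lt' hR]
    have huvne : u - v ≠ 0 := sub_ne_zero.2 huv
    have huv2 : (0:ℝ) < (u - v) ^ 2 := by positivity
    have hprod : (u * v + s) ^ 2 < (u ^ 2 + s) * (v ^ 2 + s) := by nlinarith
    have h2 : u * v + s < Real.sqrt ((u ^ 2 + s) * (v ^ 2 + s)) := by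
      rcases le_or_gt 0 (u * v + s) with h | h
      · calc u * v + s = Real.sqrt ((u * v + s) ^ 2) := (Real.sqrt_sq h).symm
          _ < _ := Real.sqrt_lt_sqrt (by positivity) hprod
      · exact lt_of_lt_of_le h (Real.sqrt_nonneg _)
    have hm : Real.sqrt (u ^ 2 + s) * Real.sqrt (v ^ 2 + s)
        = Real.sqrt ((u ^ 2 + s) * (v ^ 2 + s)) := (Real.sqrt_mul h1u.le _).symm
    have e1 : (a * Real.sqrt (u ^ 2 + s) + b * Real.sqrt (v ^ 2 + s)) ^ 2
        = a ^ 2 * (u ^ 2 + s) + b ^ 2 * (v ^ 2 + s)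
          + 2 * a * b * (Real.sqrt (u ^ 2 + s) * Real.sqrt (v ^ 2 + s)) := by
      linear_combination a ^ 2 * Real.sq_sqrt h1u.le + b ^ 2 * Real.sq_sqrt h1v.le
    have e2 : u * v + s < Real.sqrt (u ^ 2 + s) * Real.sqrt (v ^ 2 + s) := by
      rw [hm]; exact h2
    have hab2 : (0:ℝ) < 2 * a * b := by positivity
    have e3 : 2 * a * b * (u * v + s)
        < 2 * a * b * (Real.sqrt (u ^ 2 + s) * Real.sqrt (v ^ 2 + s)) :=
      (mul_lt_mul_of_pos_left e2 hab2)
    have expand : a ^ 2 * (u ^ 2 + s) + b ^ 2 * (v ^ 2 + s) + 2 * a * b * (u * v + s)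
        = (a * u + b * v) ^ 2 + s := by
      linear_combination (s * (a + b + 1)) * hab
    linarith
  calc δhat (Real.sqrt ((a * u + b * v) ^ 2 + s))
      < δhat (a * Real.sqrt (u ^ 2 + s) + b * Real.sqrt (v ^ 2 + s)) :=
        hmono _ _ (Real.sqrt_nonneg _) key
    _ ≤ a * δhat (Real.sqrt (u ^ 2 + s)) + b * δhat (Real.sqrt (v ^ 2 + s)) := by
        have := hconv.2 (Set.mem_univ (Real.sqrt (u ^ 2 + s))) (Set.mem_univ (Real.sqrt (v ^ 2 + s)))
          ha.le hb.le hab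
        simpa using this

lemma fourPoint {φ : ℝ → ℝ} (hφ : StrictConvexOn ℝ Set.univ φ)
    {p q r s : ℝ} (hpr : p < r) (hps : p < s) (hsum : p + q = r + s) :
    φ r + φ s < φ p + φ q := by
  have hrq : r < q := by linarith
  have hpq : p < q := by linarith
  have hqp : q - p ≠ 0 := by intro h; have := sub_eq_zero.1 h; linarith
  set l : ℝ := (q - r) / (q - p) with hl
  have h0 : 0 < l := div_pos (by linarith) (by linarith)
  have h1 : l < 1 := (div_lt_one (by linarith)).2 (by linarith)
  have hlqp : l * (q - p) = q - r := div_mul_cancel₀ _ hqp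
  have hr : r = l * p + (1 - l) * q := by linear_combination hlqp
  have hs' : s = (1 - l) * p + l * q := by linear_combination - hlqp - hsum
  have key := fun (a b : ℝ) (ha : 0 < a) (hb : 0 < b) (hab : a + b = 1) =>
    hφ.2 (Set.mem_univ p) (Set.mem_univ q) (ne_of_lt hpq) ha hb hab
  have A := key l (1 - l) h0 (by linarith) (by ring)
  have B := key (1 - l) l (by linarith) h0 (by ring)
  simp only [smul_eq_mul] at A B
  rw [← hr] at A
  rw [← hs'] at B
  linarith

lemma injAux {φ : ℝ → ℝ} (hφ : StrictConvexOn ℝ Set.univ φ) {A B : ℝ} (hAB : A ≠ B) :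
    Function.Injective (fun t => φ (t + A) - φ (t + B)) := by
  intro t₁ t₂ h
  simp only at h
  by_contra hne
  rcases lt_trichotomy t₁ t₂ with hlt | heq | hlt
  · rcases lt_or_gt_of_ne hAB with hAB' | hAB'
    · have := fourPoint hφ (p := t₁ + A) (q := t₂ + B) (r := t₁ + B) (s := t₂ + A)
        (by linarith) (by linarith) (by ring)
      linarith
    · have := fourPoint hφ (p := t₁ + B) (q := t₂ + A) (r := t₁ + A) (s := t₂ + B)
        (by linarith) (by linarith) (by ring)
      linarith
  · exact hne heq
  · rcases lt_or_gt_of_ne hAB with hAB' | hAB'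
    · have := fourPoint hφ (p := t₂ + A) (q := t₁ + B) (r := t₂ + B) (s := t₁ + A)
        (by linarith) (by linarith) (by ring)
      linarith
    · have := fourPoint hφ (p := t₂ + B) (q := t₁ + A) (r := t₂ + A) (s := t₁ + B)
        (by linarith) (by linarith) (by ring)
      linarith

lemma levelNull (d : ℕ) (hd : 1 ≤ d) {δhat : ℝ → ℝ}
    (hmono : ∀ u v : ℝ, 0 ≤ u → u < v → δhat u < δhat v)
    (p : EuclideanSpace ℝ (Fin d)) (c : ℝ) :
    volume {x : EuclideanSpace ℝ (Fin d) | δhat ‖x - p‖ = c} = 0 := by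
  haveI : Nonempty (Fin d) := ⟨⟨0, by omega⟩⟩
  haveI : Nontrivial (EuclideanSpace ℝ (Fin d)) := by
    refine nontrivial_of_ne (EuclideanSpace.single ⟨0, by omega⟩ (1:ℝ)) 0 ?_
    intro h
    have := congrArg (fun z => z ⟨0, by omega⟩) h
    simp [EuclideanSpace.single_apply] at this
  by_cases h : ∃ r : ℝ, 0 ≤ r ∧ δhat r = c
  · obtain ⟨r, hr0, hrc⟩ := h
    refine measure_mono_null ?_ (Measure.addHaar_sphere volume p r)
    intro x hx
    simp only [Set.mem_setOf_eq] at hx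
    have hxr : ‖x - p‖ = r := by
      by_contra hne
      rcases lt_or_gt_of_ne hne with hlt | hlt
      · have := hmono _ _ (norm_nonneg _) hlt
        rw [hx, hrc] at this; exact lt_irrefl _ this
      · have := hmono _ _ hr0 hlt
        rw [hx, hrc] at this; exact lt_irrefl _ this
    simpa [Metric.mem_sphere, dist_eq_norm] using hxr
  · have he : {x : EuclideanSpace ℝ (Fin d) | δhat ‖x - p‖ = c} = ∅ := by
      ext x
      simp only [Set.mem_setOf_eq, Set.mem_empty_iff_false, iff_false]
      intro hx
      exact h ⟨‖x - p‖, norm_nonneg _, hx⟩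
    rw [he]
    simp

lemma bisectorNull (m : ℕ) (hm : 1 ≤ m) {δhat : ℝ → ℝ}
    (hcont : Continuous δhat)
    (hconv : ConvexOn ℝ Set.univ δhat)
    (hmono : ∀ u v : ℝ, 0 ≤ u → u < v → δhat u < δhat v)
    (p q : EuclideanSpace ℝ (Fin (m + 1))) (hpq : p ≠ q) (c : ℝ) :
    volume {x : EuclideanSpace ℝ (Fin (m + 1)) | δhat ‖x - p‖ = δhat ‖x - q‖ + c} = 0 := by
  classical
  set v : EuclideanSpace ℝ (Fin (m + 1)) := q - p with hvdef
  have hv : v ≠ 0 := sub_ne_zero.2 (Ne.symm hpq)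
  have hvn : 0 < ‖v‖ := norm_pos_iff.2 hv
  set e : EuclideanSpace ℝ (Fin (m + 1)) := ‖v‖⁻¹ • v with he
  have hev : v = ‖v‖ • e := by
    rw [he, smul_smul, mul_inv_cancel₀ hvn.ne', one_smul]
  have hee : ‖e‖ = 1 := by
    rw [he, norm_smul, norm_inv, norm_norm, inv_mul_cancel₀ hvn.ne']
  -- orthonormal basis with b 0 = e
  have hcard : Module.finrank ℝ (EuclideanSpace ℝ (Fin (m + 1))) = Fintype.card (Fin (m + 1)) :=
    finrank_euclideanSpace
  have horth : Orthonormal ℝ (Set.restrict ({0} : Set (Fin (m + 1))) (fun _ => e)) := by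
    constructor
    · intro i; exact hee
    · intro i j hij
      exact absurd (Subtype.ext (i.2.trans j.2.symm)) hij
  obtain ⟨b, hb0⟩ := horth.exists_orthonormalBasis_extension_of_card_eq hcard
  have hb0' : b 0 = e := hb0 0 rfl
  -- the measure-preserving parametrization
  set Ψ : (Fin m → ℝ) × ℝ → EuclideanSpace ℝ (Fin (m + 1)) :=
    (⇑b.repr.symm) ∘ (⇑(MeasurableEquiv.toLp 2 (Fin (m + 1) → ℝ))) ∘
      (⇑(MeasurableEquiv.piFinSuccAbove (fun _ : Fin (m + 1) => ℝ) 0).symm) ∘ Prod.swap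
    with hΨdef
  have hΨ : MeasurePreserving Ψ (volume.prod volume) volume := by
    refine b.measurePreserving_repr_symm.comp ?_
    refine ((EuclideanSpace.volume_preserving_symm_measurableEquiv_toLp (Fin (m + 1))).symm).comp ?_
    have h1 : MeasurePreserving
        (⇑(MeasurableEquiv.piFinSuccAbove (fun _ : Fin (m + 1) => ℝ) 0).symm)
        ((volume : Measure ℝ).prod (volume : Measure (Fin m → ℝ)))
        (volume : Measure (Fin (m + 1) → ℝ)) := by
      have h2 := (measurePreserving_piFinSuccAbove (fun _ : Fin (m + 1) => (volume : Measure ℝ)) 0).symm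
      have hv1 : (volume : Measure (Fin (m + 1) → ℝ)) = Measure.pi fun _ => volume := volume_pi
      have hv2 : (volume : Measure (Fin m → ℝ)) = Measure.pi fun _ => volume := volume_pi
      rw [hv1, hv2]
      exact h2
    exact h1.comp Measure.measurePreserving_swap
  set B : Set (EuclideanSpace ℝ (Fin (m + 1))) :=
    {x | δhat ‖x - p‖ = δhat ‖x - q‖ + c} with hBdef
  have hBm : MeasurableSet B := by
    have hc1 : Continuous fun x : EuclideanSpace ℝ (Fin (m + 1)) => δhat ‖x - p‖ :=
      hcont.comp ((continuous_id.sub continuous_const).norm)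
    have hc2 : Continuous fun x : EuclideanSpace ℝ (Fin (m + 1)) => δhat ‖x - q‖ + c :=
      (hcont.comp ((continuous_id.sub continuous_const).norm)).add continuous_const
    exact (isClosed_eq hc1 hc2).measurableSet
  rw [← hΨ.measure_preimage hBm.nullMeasurableSet]
  rw [Measure.measure_prod_null (hΨ.measurable hBm)]
  -- the bad point
  set κ : Fin m → ℝ := fun j => (inner ℝ (b ((0 : Fin (m + 1)).succAbove j)) p : ℝ) with hκdef
  have hκnull : (volume : Measure (Fin m → ℝ)) {κ} = 0 := by
    rw [← Set.univ_pi_singleton, volume_pi, Measure.pi_pi]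
    refine Finset.prod_eq_zero (Finset.mem_univ (⟨0, by omega⟩ : Fin m)) ?_
    exact measure_singleton _
  have hae : ∀ᵐ w : Fin m → ℝ, w ≠ κ := by
    rw [ae_iff]
    convert hκnull using 2
    ext w
    simp
  filter_upwards [hae] with w hw
  simp only [Pi.zero_apply]
  -- compute Ψ (w, t)
  have hΨapp : ∀ t : ℝ, Ψ (w, t) =
      b.repr.symm ((WithLp.equiv 2 (Fin (m + 1) → ℝ)).symm ((0 : Fin (m + 1)).insertNth t w)) := by
    intro t
    simp only [hΨdef, Function.comp_apply, Prod.swap_prod_mk,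
      MeasurableEquiv.coe_toLp, MeasurableEquiv.piFinSuccAbove_symm_apply]
    rfl
  have hlin : ∀ t : ℝ, Ψ (w, t) = Ψ (w, 0) + t • e := by
    intro t
    rw [hΨapp, hΨapp]
    have h1 : Fin.insertNth (α := fun _ => ℝ) 0 t w
        = Fin.insertNth (α := fun _ => ℝ) 0 0 w + t • Pi.single (M := fun _ => ℝ) 0 1 := by
      funext k
      induction k using Fin.cases with
      | zero =>
          simp [Fin.insertNth_apply_same]
      | succ j =>
          have hj : ((0 : Fin (m + 1)).succAbove j) = j.succ := by
            rw [Fin.succAbove_zero]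
          rw [← hj]
          simp only [Pi.add_apply, Pi.smul_apply, Fin.insertNth_apply_succAbove]
          rw [Pi.single_eq_of_ne (by rw [hj]; exact (Fin.succ_ne_zero j))]
          simp
    rw [h1, WithLp.equiv_symm_apply, WithLp.toLp_add, WithLp.toLp_smul, map_add, LinearIsometryEquiv.map_smul,
      PiLp.toLp_single, OrthonormalBasis.repr_symm_single, hb0']
  have hcoord : ∀ k, (inner ℝ (b k) (Ψ (w, 0)) : ℝ) = Fin.insertNth (α := fun _ => ℝ) 0 0 w k := by
    intro k
    rw [← OrthonormalBasis.repr_apply_apply, hΨapp, LinearIsometryEquiv.apply_symm_apply,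
      WithLp.equiv_symm_apply, PiLp.toLp_apply]

  set x₀ := Ψ (w, 0) with hx0
  set u : EuclideanSpace ℝ (Fin (m + 1)) := x₀ - p with hudef
  set A : ℝ := (inner ℝ e u : ℝ) with hA
  set s : ℝ := ‖u‖ ^ 2 - A ^ 2 with hsdef
  clear_value x₀ u A s
  have hCS : |A| ≤ ‖u‖ := by
    have h := abs_real_inner_le_norm e u
    rw [hee, one_mul] at h
    rw [hA]
    exact h
  have hs0 : 0 ≤ s := by
    have h1 : A ^ 2 ≤ ‖u‖ ^ 2 := by
      nlinarith [abs_nonneg A, sq_abs A, norm_nonneg u]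
    rw [hsdef]; linarith
  have hnorm : ∀ (t : ℝ) (z : EuclideanSpace ℝ (Fin (m + 1))),
      ‖Ψ (w, t) - z‖ ^ 2 = (t + (inner ℝ e (x₀ - z) : ℝ)) ^ 2
        + (‖x₀ - z‖ ^ 2 - (inner ℝ e (x₀ - z) : ℝ) ^ 2) := by
    intro t z
    rw [hlin]
    have h2 : x₀ + t • e - z = (x₀ - z) + t • e := by abel
    rw [h2, norm_add_sq_real]
    have h3 : (inner ℝ (x₀ - z) (t • e) : ℝ) = t * (inner ℝ e (x₀ - z) : ℝ) := by
      rw [real_inner_smul_right, real_inner_comm]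
    have h4 : ‖t • e‖ ^ 2 = t ^ 2 := by
      rw [norm_smul, hee, mul_one, Real.norm_eq_abs, sq_abs]
    rw [h3, h4]; ring
  have hinner_v : (inner ℝ e v : ℝ) = ‖v‖ := by
    rw [he, real_inner_smul_left, real_inner_self_eq_norm_sq, sq,
      inv_mul_cancel_left₀ hvn.ne']
  have hxq : x₀ - q = u - v := by rw [hudef, hvdef]; abel
  have hAq : (inner ℝ e (x₀ - q) : ℝ) = A - ‖v‖ := by
    rw [hxq, inner_sub_right, hinner_v, ← hA]
  have hinner_uv : (inner ℝ u v : ℝ) = ‖v‖ * A := by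
    conv_lhs => rw [hev]
    rw [real_inner_smul_right, real_inner_comm, ← hA]
  have hsq : ‖x₀ - q‖ ^ 2 - (A - ‖v‖) ^ 2 = s := by
    rw [hxq, norm_sub_sq_real, hinner_uv, hsdef]; ring
  have hnp : ∀ t : ℝ, ‖Ψ (w, t) - p‖ = Real.sqrt ((t + A) ^ 2 + s) := by
    intro t
    rw [← Real.sqrt_sq (norm_nonneg (Ψ (w, t) - p))]
    congr 1
    rw [hnorm t p, ← hudef, ← hA, hsdef]
  have hnq : ∀ t : ℝ, ‖Ψ (w, t) - q‖ = Real.sqrt ((t + (A - ‖v‖)) ^ 2 + s) := by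
    intro t
    rw [← Real.sqrt_sq (norm_nonneg (Ψ (w, t) - q))]
    congr 1
    rw [hnorm t q, hAq, hsq]
  rcases lt_or_eq_of_le hs0 with hspos | hszero
  · have hφ := sqrtSqStrictConvex hconv hmono hspos
    have hABne : A ≠ A - ‖v‖ := by
      intro hh
      have hv0 : ‖v‖ = 0 := by linarith
      exact hvn.ne' hv0
    have hinj := injAux hφ hABne
    refine Set.Subsingleton.measure_zero ?_ volume
    intro t₁ h₁ t₂ h₂
    simp only [Set.mem_preimage, hBdef, Set.mem_setOf_eq] at h₁ h₂
    rw [hnp t₁, hnq t₁] at h₁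
    rw [hnp t₂, hnq t₂] at h₂
    apply hinj
    simp only
    linarith
  · exfalso
    apply hw
    funext j
    have hpar : ‖u‖ ^ 2 = ∑ k : Fin (m + 1), (b.repr u k) ^ 2 := by
      rw [← b.repr.norm_map u, EuclideanSpace.norm_eq,
        Real.sq_sqrt (Finset.sum_nonneg fun _ _ => sq_nonneg _)]
      congr 1
      funext k
      rw [Real.norm_eq_abs, sq_abs]
    have hrepr0 : b.repr u 0 = A := by
      rw [OrthonormalBasis.repr_apply_apply, hb0', ← hA]
    have hsum : ∑ k : Fin (m + 1), (b.repr u k) ^ 2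
        = (b.repr u 0) ^ 2 + ∑ j : Fin m, (b.repr u ((0 : Fin (m + 1)).succAbove j)) ^ 2 :=
      Fin.sum_univ_succAbove _ 0
    have hterm : ∀ j : Fin m, b.repr u ((0 : Fin (m + 1)).succAbove j) = w j - κ j := by
      intro j
      rw [OrthonormalBasis.repr_apply_apply, hudef, inner_sub_right, hcoord,
        Fin.insertNth_apply_succAbove]
    have hzero : ∑ j : Fin m, (w j - κ j) ^ 2 = 0 := by
      have h5 : ∑ j : Fin m, (w j - κ j) ^ 2 = ‖u‖ ^ 2 - A ^ 2 := by
        rw [hpar, hsum, hrepr0]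
        simp only [hterm]
        ring
      rw [h5, ← hsdef]; exact hszero.symm
    have hj := (Finset.sum_eq_zero_iff_of_nonneg (fun i _ => sq_nonneg _)).1 hzero j
      (Finset.mem_univ j)
    have := sq_eq_zero_iff.1 hj
    linarith [sub_eq_zero.1 this]


/-- Generalized Laguerre cells have null pairwise intersections. The cell indexed by
`some i` is the cell of station `i`; the cell indexed by `none` is the residual
"no-match" region `C₀`. -/
theorem laguerre_cells_null_intersection
    (d n : ℕ) (hd : 2 ≤ d)
    (δhat : ℝ → ℝ)
    (hcont : Continuous δhat)
    (hdiff : Differentiable ℝ δhat)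
    (hconv : ConvexOn ℝ Set.univ δhat)
    (hmono : ∀ u v : ℝ, 0 ≤ u → u < v → δhat u < δhat v)
    (hzero : δhat 0 = 0)
    (y : Fin n → EuclideanSpace ℝ (Fin d))
    (hy : Function.Injective y)
    (ω : Fin n → ℝ) (ω₀ : ℝ)
    (C : Option (Fin n) → Set (EuclideanSpace ℝ (Fin d)))
    (hC : ∀ i : Fin n, C (some i) =
      {x | δhat (‖x - y i‖) + ω i ≤ ω₀ ∧
        ∀ k : Fin n, k ≠ i → δhat (‖x - y i‖) + ω i ≤ δhat (‖x - y k‖) + ω k})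
    (hC0 : C none = {x | ∀ k : Fin n, ω₀ ≤ δhat (‖x - y k‖) + ω k}) :
    ∀ i j : Option (Fin n), i ≠ j → volume (C i ∩ C j) = 0 := by
  obtain ⟨m, rfl⟩ : ∃ m, d = m + 1 := ⟨d - 1, by omega⟩
  have hm : 1 ≤ m := by omega
  have key_ss : ∀ i j : Fin n, i ≠ j → volume (C (some i) ∩ C (some j)) = 0 := by
    intro i j hij
    refine measure_mono_null (t :=
      {x : EuclideanSpace ℝ (Fin (m + 1)) | δhat ‖x - y i‖ = δhat ‖x - y j‖ + (ω j - ω i)}) ?_ ?_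
    · rintro x ⟨hxi, hxj⟩
      rw [hC i] at hxi
      rw [hC j] at hxj
      have h1 := hxi.2 j (Ne.symm hij)
      have h2 := hxj.2 i hij
      simp only [Set.mem_setOf_eq]
      linarith
    · exact bisectorNull m hm hcont hconv hmono (y i) (y j)
        (fun h => hij (hy h)) _
  have key_s0 : ∀ i : Fin n, volume (C (some i) ∩ C none) = 0 := by
    intro i
    refine measure_mono_null (t :=
      {x : EuclideanSpace ℝ (Fin (m + 1)) | δhat ‖x - y i‖ = ω₀ - ω i}) ?_ ?_
    · rintro x ⟨hxi, hx0⟩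
      rw [hC i] at hxi
      rw [hC0] at hx0
      have h1 := hx0 i
      simp only [Set.mem_setOf_eq]
      linarith [hxi.1]
    · exact levelNull (m + 1) (by omega) hmono (y i) _
  rintro (_ | i) (_ | j) hij
  · exact absurd rfl hij
  · rw [Set.inter_comm]
    exact key_s0 j
  · exact key_s0 i
  · exact key_ss i j (fun hh => hij (by rw [hh]))
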